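/- Every connected finite simple graph G with independence number α(G) ≤ 3 has a Gallai vertex, i.e., a vertex contained in every longest path of G. Equivalently, 4P1 is a fixer: every connected 4P1-free graph has a Gallai vertex. -/

import Mathlib

open SimpleGraph List

section Helpers
variable {V : Type} (G : SimpleGraph V)

lemma exists_walk_of_chain' : ∀ (l : List V), l.Chain' G.Adj → l ≠ [] →
    ∃ (a b : V) (w : G.Walk a b), w.support = l := by
  intro l hch hne
  induction l with
  | nil => exact absurd rfl hne
  | cons a t ih =>
    cases t with
    | nil => exact ⟨a, a, Walk.nil, rfl⟩
    | cons b t' =>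
      obtain ⟨hab, hch'⟩ := List.isChain_cons_cons.mp hch
      obtain ⟨a', b', w, hw⟩ := ih hch' (by simp)
      have ha' : a' = b := by
        have := w.support_eq_cons
        rw [hw] at this
        exact ((List.cons.injEq _ _ _ _ ▸ this).1).symm
      subst ha'
      exact ⟨a, b', Walk.cons hab w, by simp [hw]⟩

lemma take_getLast' (l : List V) (i : ℕ) (h : i < l.length) :
    (l.take (i+1)).getLast? = l[i]? := by
  rw [List.getLast?_eq_getElem?]
  have hlen : (l.take (i+1)).length = i + 1 := by
    simp [List.length_take]; omega
  rw [hlen]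
  simpa using List.getElem?_take_of_lt (l := l) (by omega : i < i + 1)

lemma drop_head' (l : List V) (i : ℕ) :
    (l.drop i).head? = l[i]? := by
  rw [List.head?_eq_getElem?, List.getElem?_drop]
  simp

lemma drop_getLast' (l : List V) (i : ℕ) (h : i < l.length) :
    (l.drop i).getLast? = l.getLast? := by
  rw [List.getLast?_eq_getElem?, List.getLast?_eq_getElem?, List.getElem?_drop,
    List.length_drop]
  congr 1
  omega

lemma take_head' (l : List V) (i : ℕ) (h : 0 < i) :
    (l.take i).head? = l.head? := by
  rw [List.head?_eq_getElem?, List.head?_eq_getElem?]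
  exact List.getElem?_take_of_lt h

lemma chain'_rev {l : List V} (hch : l.Chain' G.Adj) : l.reverse.Chain' G.Adj :=
  List.isChain_reverse.mpr (hch.imp fun _ _ h => h.symm)

lemma pairwise_of_forall_ne' {l : List V} {R : V → V → Prop} (hnd : l.Nodup)
    (h : ∀ a ∈ l, ∀ b ∈ l, a ≠ b → R a b) : l.Pairwise R := by
  induction l with
  | nil => exact List.Pairwise.nil
  | cons a t ih =>
    rw [List.nodup_cons] at hnd
    refine List.Pairwise.cons (fun b hb => ?_) (ih hnd.2 fun a ha b hb hne =>
      h a (by simp [ha]) b (by simp [hb]) hne)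
    exact h a (by simp) b (by simp [hb]) (fun he => hnd.1 (he ▸ hb))

lemma exists_boundary_edge {sF : Finset V} :
    ∀ {w x : V} (_ : G.Walk w x), w ∉ sF → x ∈ sF →
      ∃ a b, a ∉ sF ∧ b ∈ sF ∧ G.Adj a b := by
  intro w x W
  induction W with
  | nil => intro hw hx; exact absurd hx hw
  | @cons u u' _ h q ih =>
    intro hw hx
    by_cases hu' : u' ∈ sF
    · exact ⟨u, u', hw, hu', h⟩
    · exact ih hu' hx

lemma exists_boundary_in_list (P : V → Prop) :
    ∀ (t : List V), t.Chain' G.Adj → (∃ p ∈ t, P p) → (∃ q ∈ t, ¬ P q) →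
      ∃ w z, w ∈ t ∧ z ∈ t ∧ G.Adj w z ∧ P w ∧ ¬ P z := by
  intro t
  induction t with
  | nil => rintro _ ⟨p, hp, _⟩; simp at hp
  | cons a t' ih =>
    intro hch hp hq
    cases t' with
    | nil =>
      obtain ⟨p, hp, hPp⟩ := hp
      obtain ⟨q, hq, hPq⟩ := hq
      simp at hp hq
      subst hp; subst hq; exact absurd hPp hPq
    | cons b t'' =>
      obtain ⟨hab, hch'⟩ := List.isChain_cons_cons.mp hch
      by_cases hPa : P a
      · by_cases hPb : P b
        · obtain ⟨q, hqmem, hPq⟩ := hq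
          have hq' : q ∈ b :: t'' := by
            rcases List.mem_cons.mp hqmem with h | h
            · exact absurd (h ▸ hPa) hPq
            · exact h
          obtain ⟨w, z, hw, hz, h1, h2, h3⟩ :=
            ih hch' ⟨b, by simp, hPb⟩ ⟨q, hq', hPq⟩
          exact ⟨w, z, by simp [hw], by simp [hz], h1, h2, h3⟩
        · exact ⟨a, b, by simp, by simp, hab, hPa, hPb⟩
      · by_cases hPb : P b
        · exact ⟨b, a, by simp, by simp, hab.symm, hPb, hPa⟩
        · obtain ⟨p, hpmem, hPp⟩ := hp
          have hp' : p ∈ b :: t'' := by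
            rcases List.mem_cons.mp hpmem with h | h
            · exact absurd (h ▸ hPp) hPa
            · exact h
          obtain ⟨w, z, hw, hz, h1, h2, h3⟩ :=
            ih hch' ⟨p, hp', hPp⟩ ⟨b, by simp, hPb⟩
          exact ⟨w, z, by simp [hw], by simp [hz], h1, h2, h3⟩

lemma rot_aux {l : List V} (hnd : l.Nodup) (hch : l.Chain' G.Adj)
    (hcyc : ∀ a ∈ l.getLast?, ∀ b ∈ l.head?, G.Adj a b)
    {w z : V} (hw : w ∉ l) (hz : z ∈ l) (hadj : G.Adj w z) :
    ∃ l' : List V, l'.Nodup ∧ l'.Chain' G.Adj ∧ l'.length = l.length + 1 := by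
  obtain ⟨t, ht, hzt⟩ := List.mem_iff_getElem.mp hz
  refine ⟨w :: (l.drop t ++ l.take t), ?_, ?_, ?_⟩
  · have hperm : (l.drop t ++ l.take t).Perm l := by
      calc l.drop t ++ l.take t ~ l.take t ++ l.drop t := List.perm_append_comm
        _ = l := List.take_append_drop t l
    rw [List.nodup_cons]
    exact ⟨fun hmem => hw (hperm.mem_iff.mp hmem), hperm.nodup_iff.mpr hnd⟩
  · simp only [List.Chain']; rw [List.isChain_cons]
    constructor
    · intro y hy
      rw [List.head?_append_of_ne_nil _ (by
        intro h; rw [List.drop_eq_nil_iff] at h; omega)] at hy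
      rw [drop_head'] at hy
      rw [List.getElem?_eq_getElem ht] at hy
      simp at hy
      rw [← hy, hzt]
      exact hadj
    · rw [List.isChain_append]
      refine ⟨hch.drop t, hch.take t, ?_⟩
      intro p hp q hq
      rcases Nat.eq_zero_or_pos t with h0 | h0
      · subst h0; simp at hq
      · rw [drop_getLast' _ _ ht] at hp
        rw [take_head' _ _ h0] at hq
        exact hcyc p hp q hq
  · simp [List.length_drop, List.length_take]
    omega

end Helpers

/-- `p` is a longest path in the graph `G`. -/
def IsLongestPath {V : Type} (G : SimpleGraph V) {u v : V} (p : G.Walk u v) : Prop :=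
  p.IsPath ∧ ∀ (a b : V) (q : G.Walk a b), q.IsPath → q.length ≤ p.length

/-- Every connected graph with independence number at most `3` has a Gallai vertex:
a vertex lying on every longest path. -/
theorem gallai_vertex_of_alpha_le_three
    {V : Type} [Fintype V] (G : SimpleGraph V)
    (hconn : G.Connected)
    (hα : ∀ s : Finset V, (∀ a ∈ s, ∀ b ∈ s, a ≠ b → ¬ G.Adj a b) → s.card ≤ 3) :
    ∃ u : V, ∀ (a b : V) (p : G.Walk a b), IsLongestPath G p → u ∈ p.support := by
  classical
  obtain ⟨v0⟩ := hconn.nonempty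
  set S : Set ℕ := {m | ∃ l : List V, l.Nodup ∧ l.Chain' G.Adj ∧ l.length = m} with hS
  have hbdd : BddAbove S := ⟨Fintype.card V, fun m ⟨l, hnd, _, hlen⟩ =>
    hlen ▸ hnd.length_le_card⟩
  have hone : (1 : ℕ) ∈ S := ⟨[v0], by simp, List.isChain_singleton _, rfl⟩
  set N := sSup S with hNdef
  have hNmem : N ∈ S := Nat.sSup_mem ⟨1, hone⟩ hbdd
  obtain ⟨s, hs_nd, hs_ch, hs_len⟩ := hNmem
  have hmax : ∀ t : List V, t.Nodup → t.Chain' G.Adj → t.length ≤ N :=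
    fun t h1 h2 => le_csSup hbdd ⟨t, h1, h2, rfl⟩
  have hN1 : 1 ≤ N := le_csSup hbdd hone
  have hcontra : ∀ l : List V, l.Nodup → l.Chain' G.Adj → N < l.length → False :=
    fun l h1 h2 h3 => absurd (hmax l h1 h2) (by omega)
  suffices hsuff : ∃ u : V, ∀ t : List V, t.Nodup → t.Chain' G.Adj → t.length = N → u ∈ t by
    obtain ⟨u, hu⟩ := hsuff
    refine ⟨u, fun a b p hp => ?_⟩
    have h1 : p.support.length ≤ N := hmax _ hp.1.support_nodup p.isChain_adj_support
    obtain ⟨a', b', w, hw⟩ := exists_walk_of_chain' G s hs_ch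
      (by intro h; rw [h] at hs_len; simp at hs_len; omega)
    have hwpath : w.IsPath := by rw [Walk.isPath_def, hw]; exact hs_nd
    have h2 := hp.2 a' b' w hwpath
    have h3 : w.length + 1 = N := by rw [← Walk.length_support, hw, hs_len]
    have h4 : p.support.length = N := by
      have := Walk.length_support p
      omega
    exact hu _ hp.1.support_nodup p.isChain_adj_support h4
  set sF := s.toFinset with hsF
  have hsF_card : sF.card = N := by rw [hsF, List.toFinset_card_of_nodup hs_nd, hs_len]
  set K : Finset V := Finset.univ \ sF with hKdef
  have hmemK : ∀ w, w ∈ K ↔ w ∉ s := by intro w; simp [hKdef, hsF]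
  by_cases hKe : K = ∅
  · -- spanning case: s contains every vertex, so every good list of length N is spanning
    have huniv : sF = Finset.univ := by
      rw [Finset.eq_univ_iff_forall]
      intro z
      by_contra hz
      have : z ∈ K := by rw [hKdef, Finset.mem_sdiff]; exact ⟨Finset.mem_univ z, hz⟩
      rw [hKe] at this
      simp at this
    have hcardV : Fintype.card V = N := by
      rw [← hsF_card, huniv, Finset.card_univ]
    refine ⟨v0, fun t hnd hch hlen => ?_⟩
    have h1 : t.toFinset.card = N := by rw [List.toFinset_card_of_nodup hnd, hlen]
    have h2 : t.toFinset = Finset.univ := Finset.eq_univ_of_card _ (by rw [h1, hcardV])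
    have : v0 ∈ t.toFinset := h2 ▸ Finset.mem_univ v0
    exact List.mem_toFinset.mp this
  · -- main case: K nonempty
    have hk1 : 1 ≤ K.card := Finset.card_pos.mpr (Finset.nonempty_iff_ne_empty.mpr hKe)
    set v : ℕ → V := fun i => s.getD i v0 with hvdef
    have hsl : s.length = N := hs_len
    have hv_get : ∀ {i}, i < N → s[i]? = some (v i) := by
      intro i hi
      have hi' : i < s.length := by omega
      rw [List.getElem?_eq_getElem hi']
      simp [hvdef, List.getD_eq_getElem?_getD, List.getElem?_eq_getElem hi']
    have hv_eq : ∀ {i} (h : i < s.length), s[i] = v i := by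
      intro i h
      have := hv_get (by omega : i < N)
      rw [List.getElem?_eq_getElem h] at this
      exact Option.some.inj this
    have hv_mem : ∀ {i}, i < N → v i ∈ s := by
      intro i hi
      have hi' : i < s.length := by omega
      rw [← hv_eq hi']
      exact List.getElem_mem hi'
    have hv_inj : ∀ {i m}, i < N → m < N → v i = v m → i = m := by
      intro i m hi hm he
      have hi' : i < s.length := by omega
      have hm' : m < s.length := by omega
      rw [← hv_eq hi', ← hv_eq hm'] at he
      exact (List.Nodup.getElem_inj_iff hs_nd).mp he
    have hmem_ex : ∀ z ∈ s, ∃ i, i < N ∧ z = v i := by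
      intro z hz
      obtain ⟨i, hi, he⟩ := List.mem_iff_getElem.mp hz
      exact ⟨i, by omega, by rw [← hv_eq hi, he]⟩
    have hstep : ∀ i, i + 1 < N → G.Adj (v i) (v (i+1)) := by
      intro i hi
      have h1 : i + 1 < s.length := by omega
      have := List.isChain_iff_getElem.mp hs_ch i h1
      simpa [List.get_eq_getElem, hv_eq] using this
    set x := v 0 with hxdef
    set y := v (N-1) with hydef
    have hhead : s.head? = some x := by
      rw [List.head?_eq_getElem?]; exact hv_get (by omega)
    have hlast : s.getLast? = some y := by
      rw [List.getLast?_eq_getElem?, hsl]; exact hv_get (by omega)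
    -- no extension at endpoints
    have hext_x : ∀ w ∈ K, ¬ G.Adj w x := by
      intro w hw hadj
      refine hcontra (w :: s) ?_ ?_ (by simp; omega)
      · exact List.nodup_cons.mpr ⟨(hmemK w).mp hw, hs_nd⟩
      · simp only [List.Chain']; rw [List.isChain_cons]
        refine ⟨?_, hs_ch⟩
        intro b hb
        rw [hhead] at hb
        simp at hb
        rwa [← hb]
    have hext_y : ∀ w ∈ K, ¬ G.Adj y w := by
      intro w hw hadj
      refine hcontra (s ++ [w]) ?_ ?_ (by simp; omega)
      · refine List.Nodup.append hs_nd (by simp) ?_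
        intro a ha hb
        simp at hb
        exact (hmemK w).mp hw (hb ▸ ha)
      · simp only [List.Chain']; rw [List.isChain_append]
        refine ⟨hs_ch, by simp, ?_⟩
        intro p hp q hq
        rw [hlast] at hp
        simp at hp hq
        rw [← hp, ← hq]
        exact hadj
    -- a boundary edge from K to s
    obtain ⟨w0, hw0⟩ := Finset.nonempty_iff_ne_empty.mpr hKe
    obtain ⟨W⟩ := hconn w0 (v 0)
    obtain ⟨wb, zb, hwbK, hzbS, hadjb⟩ := exists_boundary_edge G W
      (by rw [hKdef, Finset.mem_sdiff] at hw0; exact hw0.2)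
      (by rw [hsF, List.mem_toFinset]; exact hv_mem (by omega))
    have hwbK' : wb ∈ K := by rw [hKdef, Finset.mem_sdiff]; exact ⟨Finset.mem_univ _, hwbK⟩
    obtain ⟨ms, hmsN, hmse⟩ := hmem_ex zb (by rwa [hsF, List.mem_toFinset] at hzbS)
    have hadjm : G.Adj wb (v ms) := hmse ▸ hadjb
    have hN2 : 2 ≤ N := by
      have := hmax [wb, v ms] (by
        simp [List.nodup_cons]
        intro h
        exact (hmemK wb).mp hwbK' (h ▸ hv_mem hmsN)) (List.isChain_pair.mpr hadjm)
      simpa using this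
    have hms1 : 1 ≤ ms := by
      rcases Nat.eq_zero_or_pos ms with h | h
      · exact absurd (by rw [h] at hadjm; exact hadjm) (hext_x wb hwbK')
      · omega
    have hms2 : ms ≤ N - 2 := by
      by_contra h
      have : ms = N - 1 := by omega
      exact hext_y wb hwbK' (this ▸ hadjm).symm
    have hN3 : 3 ≤ N := by omega
    -- endpoints nonadjacent
    have hxy : ¬ G.Adj x y := by
      intro hadj
      obtain ⟨l', h1, h2, h3⟩ := rot_aux G hs_nd hs_ch
        (by intro p hp q hq; rw [hlast] at hp; rw [hhead] at hq; simp at hp hq; rw [← hp, ← hq]; exact hadj.symm)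
        ((hmemK wb).mp hwbK') (hv_mem hmsN) hadjm
      exact hcontra l' h1 h2 (by omega)
    have hxney : x ≠ y := fun he => by
      have := hv_inj (by omega) (by omega) he
      omega
    -- independence-number tool: no independent set of size 4
    have hfour : ∀ (a b c d : V), a≠b→a≠c→a≠d→b≠c→b≠d→c≠d→
        ¬G.Adj a b→¬G.Adj a c→¬G.Adj a d→¬G.Adj b c→¬G.Adj b d→¬G.Adj c d→ False := by
      intro a b c d hab hac had hbc hbd hcd nab nac nad nbc nbd ncd
      have hind : ∀ p ∈ ({a,b,c,d} : Finset V), ∀ q ∈ ({a,b,c,d} : Finset V),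
          p ≠ q → ¬ G.Adj p q := by
        intro p hp q hq hpq
        simp only [Finset.mem_insert, Finset.mem_singleton] at hp hq
        rcases hp with rfl|rfl|rfl|rfl <;> rcases hq with rfl|rfl|rfl|rfl <;>
          first
            | exact absurd rfl hpq
            | assumption
            | exact fun h => nab h.symm
            | exact fun h => nac h.symm
            | exact fun h => nad h.symm
            | exact fun h => nbc h.symm
            | exact fun h => nbd h.symm
            | exact fun h => ncd h.symm
      have hcard : ({a,b,c,d} : Finset V).card = 4 := by
        rw [Finset.card_insert_of_notMem (by simp [hab,hac,had]),
            Finset.card_insert_of_notMem (by simp [hbc,hbd]),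
            Finset.card_insert_of_notMem (by simp [hcd]),
            Finset.card_singleton]
      have := hα _ hind
      omega
    have hKnotS : ∀ w ∈ K, w ∉ s := fun w hw => (hmemK w).mp hw
    have hneq_x : ∀ w ∈ K, x ≠ w := fun w hw he => hKnotS w hw (he ▸ hv_mem (by omega))
    have hneq_y : ∀ w ∈ K, y ≠ w := fun w hw he => hKnotS w hw (he ▸ hv_mem (by omega))
    -- K is a clique
    have hclique : ∀ w ∈ K, ∀ w' ∈ K, w ≠ w' → G.Adj w w' := by
      intro w hw w' hw' hne
      by_contra hna
      exact hfour x y w w' hxney (hneq_x w hw) (hneq_x w' hw') (hneq_y w hw)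
        (hneq_y w' hw') hne hxy (fun h => hext_x w hw h.symm)
        (fun h => hext_x w' hw' h.symm) (hext_y w hw) (hext_y w' hw') hna
    -- domination by the triple {x, y, w}
    have hdom : ∀ w ∈ K, ∀ z, z ≠ x → z ≠ y → z ≠ w →
        G.Adj z x ∨ G.Adj z y ∨ G.Adj z w := by
      intro w hw z h1 h2 h3
      by_contra hno
      push_neg at hno
      obtain ⟨n1, n2, n3⟩ := hno
      exact hfour x y w z hxney (hneq_x w hw) (Ne.symm h1) (hneq_y w hw) (Ne.symm h2)
        (Ne.symm h3) hxy (fun h => hext_x w hw h.symm) (fun h => n1 h.symm)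
        (hext_y w hw) (fun h => n2 h.symm) (fun h => n3 h.symm)
    -- machinery: hamiltonian lists of the clique K ending at a chosen vertex
    set k := K.card with hkdef
    set Kl : V → List V := fun w => (K.erase w).toList ++ [w] with hKldef
    have hKl_mem : ∀ w ∈ K, ∀ z ∈ Kl w, z ∈ K := by
      intro w hw z hz
      rw [hKldef] at hz
      simp only [List.mem_append, Finset.mem_toList, List.mem_singleton] at hz
      rcases hz with h | h
      · exact Finset.mem_of_mem_erase h
      · exact h ▸ hw
    have hKl_nd : ∀ w, (Kl w).Nodup := by
      intro w
      refine List.Nodup.append (Finset.nodup_toList _) (by simp) ?_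
      intro a ha hb
      simp only [List.mem_singleton] at hb
      rw [Finset.mem_toList, hb] at ha
      exact (Finset.notMem_erase w K) ha
    have hKl_ch : ∀ w ∈ K, (Kl w).Chain' G.Adj := by
      intro w hw
      refine (pairwise_of_forall_ne' (hKl_nd w) ?_).isChain
      intro a ha b hb hne
      exact hclique a (hKl_mem w hw a ha) b (hKl_mem w hw b hb) hne
    have hKl_len : ∀ w ∈ K, (Kl w).length = k := by
      intro w hw
      rw [hKldef]
      simp [Finset.length_toList, Finset.card_erase_of_mem hw]
      omega
    have hKl_last : ∀ w, (Kl w).getLast? = some w := fun w => List.getLast?_concat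
    have hKl_disj : ∀ w ∈ K, ∀ z ∈ Kl w, z ∉ s :=
      fun w hw z hz => hKnotS z (hKl_mem w hw z hz)
    -- segment toolkit
    have htake_last : ∀ {i}, i < N → (s.take (i+1)).getLast? = some (v i) := by
      intro i hi
      rw [take_getLast' _ _ (by omega)]
      exact hv_get hi
    have hdrop_head : ∀ {i}, i < N → (s.drop i).head? = some (v i) := by
      intro i hi
      rw [drop_head']
      exact hv_get hi
    have hdrop_last : ∀ {i}, i < N → (s.drop i).getLast? = some y := by
      intro i hi
      rw [drop_getLast' _ _ (by omega)]
      exact hlast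
    have htake_head : ∀ {i}, 0 < i → (s.take i).head? = some x := by
      intro i hi
      rw [take_head' _ _ hi]
      exact hhead
    have hnd_take : ∀ i, (s.take i).Nodup := fun i => hs_nd.sublist (List.take_sublist i s)
    have hnd_drop : ∀ i, (s.drop i).Nodup := fun i => hs_nd.sublist (List.drop_sublist i s)
    have hdisj_td : ∀ i, ∀ z, z ∈ s.take i → z ∈ s.drop i → False := by
      intro i
      have h := hs_nd
      rw [← List.take_append_drop i s, List.nodup_append] at h
      exact fun z hz hz' => h.2.2 z hz z hz' rfl
    have htake_ne : ∀ {i}, 0 < i → s.take i ≠ [] := by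
      intro i hi h
      have := congrArg List.length h
      simp [List.length_take, hsl] at this
      omega
    have hdrop_ne : ∀ {i}, i < N → s.drop i ≠ [] := by
      intro i hi h
      have := congrArg List.length h
      simp [List.length_drop, hsl] at this
      omega
    -- w cannot be inserted between consecutive vertices
    have hnoK2 : ∀ w ∈ K, ∀ i, i + 1 < N → G.Adj w (v i) → G.Adj w (v (i+1)) → False := by
      intro w hw i hi h1 h2
      refine hcontra (s.take (i+1) ++ w :: s.drop (i+1)) ?_ ?_ ?_
      · refine List.Nodup.append (hnd_take _) ?_ ?_
        · exact List.nodup_cons.mpr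
            ⟨fun hmem => hKnotS w hw (List.drop_subset _ _ hmem), hnd_drop _⟩
        · intro a ha hb
          rcases List.mem_cons.mp hb with h | hb'
          · exact hKnotS w hw (h ▸ List.take_subset _ _ ha)
          · exact hdisj_td (i+1) a ha hb'
      · simp only [List.Chain']; rw [List.isChain_append]
        refine ⟨hs_ch.take _, ?_, ?_⟩
        · rw [List.isChain_cons]
          refine ⟨?_, hs_ch.drop _⟩
          intro q hq
          rw [hdrop_head hi] at hq
          simp at hq
          subst hq
          first | exact h2 | exact h2.symm
        · intro p hp q hq
          rw [htake_last (by omega)] at hp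
          simp at hp hq
          subst hp
          subst hq
          first | exact h1 | exact h1.symm
      · simp [List.length_take, List.length_drop, hsl]
        omega
    -- length bounds from clique + attachment
    have hWk : ∀ w ∈ K, ∀ i, i < N → G.Adj w (v i) → k ≤ i ∧ k + i + 1 ≤ N := by
      intro w hw i hi hadj
      constructor
      · have hnd : (Kl w ++ s.drop i).Nodup :=
          List.Nodup.append (hKl_nd w) (hnd_drop _)
            (fun a ha hb => hKl_disj w hw a ha (List.drop_subset _ _ hb))
        have hch : (Kl w ++ s.drop i).Chain' G.Adj := by
          simp only [List.Chain']; rw [List.isChain_append]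
          refine ⟨hKl_ch w hw, hs_ch.drop _, ?_⟩
          intro p hp q hq
          rw [hKl_last] at hp
          rw [hdrop_head hi] at hq
          simp at hp hq
          subst hp; subst hq
          first | exact hadj | exact hadj.symm
        have hlen := hmax _ hnd hch
        rw [List.length_append, hKl_len w hw, List.length_drop, hsl] at hlen
        omega
      · have hnd : (Kl w ++ (s.take (i+1)).reverse).Nodup :=
          List.Nodup.append (hKl_nd w) (List.nodup_reverse.mpr (hnd_take _))
            (fun a ha hb =>
              hKl_disj w hw a ha (List.take_subset _ _ (List.mem_reverse.mp hb)))
        have hch : (Kl w ++ (s.take (i+1)).reverse).Chain' G.Adj := by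
          simp only [List.Chain']; rw [List.isChain_append]
          refine ⟨hKl_ch w hw, chain'_rev G (hs_ch.take _), ?_⟩
          intro p hp q hq
          rw [hKl_last] at hp
          rw [List.head?_reverse, htake_last hi] at hq
          simp at hp hq
          subst hp; subst hq
          first | exact hadj | exact hadj.symm
        have hlen := hmax _ hnd hch
        rw [List.length_append, hKl_len w hw, List.length_reverse, List.length_take,
          hsl] at hlen
        omega
    -- attachment + x-chord rule
    have h7d : ∀ w ∈ K, ∀ i, i + 1 < N → G.Adj w (v i) → G.Adj x (v (i+1)) → False := by
      intro w hw i hi h1 h2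
      have hnd2 : ((s.take (i+1)).reverse ++ s.drop (i+1)).Nodup :=
        List.Nodup.append (List.nodup_reverse.mpr (hnd_take _)) (hnd_drop _)
          (fun a ha hb => hdisj_td (i+1) a (List.mem_reverse.mp ha) hb)
      have hch2 : ((s.take (i+1)).reverse ++ s.drop (i+1)).Chain' G.Adj := by
        simp only [List.Chain']; rw [List.isChain_append]
        refine ⟨chain'_rev G (hs_ch.take _), hs_ch.drop _, ?_⟩
        intro p hp q hq
        rw [List.getLast?_reverse, htake_head (by omega)] at hp
        rw [hdrop_head hi] at hq
        simp at hp hq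
        subst hp; subst hq
        first | exact h2 | exact h2.symm
      refine hcontra (Kl w ++ ((s.take (i+1)).reverse ++ s.drop (i+1))) ?_ ?_ ?_
      · refine List.Nodup.append (hKl_nd w) hnd2 ?_
        intro a ha hb
        rcases List.mem_append.mp hb with h | h
        · exact hKl_disj w hw a ha (List.take_subset _ _ (List.mem_reverse.mp h))
        · exact hKl_disj w hw a ha (List.drop_subset _ _ h)
      · simp only [List.Chain']; rw [List.isChain_append]
        refine ⟨hKl_ch w hw, hch2, ?_⟩
        intro p hp q hq
        rw [hKl_last] at hp
        rw [List.head?_append_of_ne_nil _ (by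
              intro h
              exact htake_ne (show 0 < i+1 by omega) (List.reverse_eq_nil_iff.mp h)),
          List.head?_reverse, htake_last (by omega)] at hq
        simp at hp hq
        subst hp; subst hq
        first | exact h1 | exact h1.symm
      · simp [List.length_append, hKl_len w hw, List.length_reverse, List.length_take,
          List.length_drop, hsl]
        omega
    -- attachment + y-chord rule
    have h7e : ∀ w ∈ K, ∀ i, 1 ≤ i → i < N → G.Adj w (v i) → G.Adj y (v (i-1)) → False := by
      intro w hw i hi1 hi h1 h2
      have hnd2 : (s.drop i ++ (s.take i).reverse).Nodup :=
        List.Nodup.append (hnd_drop _) (List.nodup_reverse.mpr (hnd_take _))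
          (fun a ha hb => hdisj_td i a (List.mem_reverse.mp hb) ha)
      have hch2 : (s.drop i ++ (s.take i).reverse).Chain' G.Adj := by
        simp only [List.Chain']; rw [List.isChain_append]
        refine ⟨hs_ch.drop _, chain'_rev G (hs_ch.take _), ?_⟩
        intro p hp q hq
        rw [hdrop_last hi] at hp
        rw [List.head?_reverse, show i = i-1+1 by omega, htake_last (by omega)] at hq
        simp at hp hq
        subst hp; subst hq
        first | exact h2 | exact h2.symm
      refine hcontra (Kl w ++ (s.drop i ++ (s.take i).reverse)) ?_ ?_ ?_
      · refine List.Nodup.append (hKl_nd w) hnd2 ?_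
        intro a ha hb
        rcases List.mem_append.mp hb with h | h
        · exact hKl_disj w hw a ha (List.drop_subset _ _ h)
        · exact hKl_disj w hw a ha (List.take_subset _ _ (List.mem_reverse.mp h))
      · simp only [List.Chain']; rw [List.isChain_append]
        refine ⟨hKl_ch w hw, hch2, ?_⟩
        intro p hp q hq
        rw [hKl_last] at hp
        rw [List.head?_append_of_ne_nil _ (hdrop_ne hi), hdrop_head hi] at hq
        simp at hp hq
        subst hp; subst hq
        first | exact h1 | exact h1.symm
      · simp [List.length_append, hKl_len w hw, List.length_reverse, List.length_take,
          List.length_drop, hsl]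
        omega
    -- crossing chords rule
    have hcross : ∀ i, 1 ≤ i → i < N → G.Adj x (v i) → G.Adj y (v (i-1)) → False := by
      intro i hi1 hi hxi hyi
      set c := s.take i ++ (s.drop i).reverse with hc
      have hcnd : c.Nodup :=
        List.Nodup.append (hnd_take _) (List.nodup_reverse.mpr (hnd_drop _))
          (fun a ha hb => hdisj_td i a ha (List.mem_reverse.mp hb))
      have hcch : c.Chain' G.Adj := by
        rw [hc]; simp only [List.Chain']; rw [List.isChain_append]
        refine ⟨hs_ch.take _, chain'_rev G (hs_ch.drop _), ?_⟩
        intro p hp q hq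
        rw [show i = i-1+1 by omega, htake_last (by omega)] at hp
        rw [List.head?_reverse, hdrop_last hi] at hq
        simp at hp hq
        subst hp; subst hq
        first | exact hyi | exact hyi.symm
      have hcyc : ∀ p ∈ c.getLast?, ∀ q ∈ c.head?, G.Adj p q := by
        intro p hp q hq
        rw [hc, List.getLast?_append, List.getLast?_reverse, hdrop_head hi] at hp
        rw [hc, List.head?_append_of_ne_nil _ (htake_ne hi1), htake_head hi1] at hq
        simp at hp hq
        subst hp; subst hq
        first | exact hxi | exact hxi.symm
      have hvms_in : v ms ∈ c := by
        have hh : v ms ∈ s := hv_mem hmsN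
        rw [← List.take_append_drop i s] at hh
        rcases List.mem_append.mp hh with h | h
        · exact List.mem_append.mpr (Or.inl h)
        · exact List.mem_append.mpr (Or.inr (List.mem_reverse.mpr h))
      have hwb_nin : wb ∉ c := by
        intro h
        rcases List.mem_append.mp h with h | h
        · exact hKnotS wb hwbK' (List.take_subset _ _ h)
        · exact hKnotS wb hwbK' (List.drop_subset _ _ (List.mem_reverse.mp h))
      obtain ⟨l', h1', h2', h3'⟩ := rot_aux G hcnd hcch hcyc hwb_nin hvms_in hadjm
      refine hcontra l' h1' h2' ?_
      have hclen : c.length = N := by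
        simp [hc, List.length_take, List.length_drop, hsl]
        omega
      omega
    -- the neighbourhood of x on s is an interval [1, a]
    set aset : Finset ℕ :=
      (Finset.range N).filter (fun i => 1 ≤ i ∧ i ≤ N-2 ∧ G.Adj x (v i)) with haset
    have ha_mem_iff : ∀ i, i ∈ aset ↔ (1 ≤ i ∧ i ≤ N-2 ∧ G.Adj x (v i)) := by
      intro i
      constructor
      · intro h; rw [haset, Finset.mem_filter] at h; exact h.2
      · intro h; rw [haset, Finset.mem_filter, Finset.mem_range]; exact ⟨by omega, h⟩
    have hane : 1 ∈ aset := by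
      rw [ha_mem_iff]
      refine ⟨le_refl 1, by omega, ?_⟩
      rw [hxdef]
      exact hstep 0 (by omega)
    have hAstep : ∀ i ∈ aset, 2 ≤ i → i - 1 ∈ aset := by
      intro i hi h2
      obtain ⟨hi1, hi2, hadjx⟩ := (ha_mem_iff i).mp hi
      have hne1 : v (i-1) ≠ x := by
        rw [hxdef]
        intro he
        have := hv_inj (by omega) (by omega) he
        omega
      have hne2 : v (i-1) ≠ y := by
        rw [hydef]
        intro he
        have := hv_inj (by omega) (by omega) he
        omega
      have hne3 : v (i-1) ≠ wb := fun he => hKnotS wb hwbK' (he ▸ hv_mem (by omega))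
      rcases hdom wb hwbK' (v (i-1)) hne1 hne2 hne3 with h | h | h
      · rw [ha_mem_iff]
        exact ⟨by omega, by omega, h.symm⟩
      · exact absurd (hcross i hi1 (by omega) hadjx h.symm) (fun h => h)
      · exfalso
        refine h7d wb hwbK' (i-1) (by omega) h.symm ?_
        rw [show i-1+1 = i by omega]
        exact hadjx
    have hAdown : ∀ d i, i ∈ aset → 1 ≤ i - d → (i - d) ∈ aset := by
      intro d
      induction d with
      | zero => intro i hi _; simpa using hi
      | succ d ih =>
        intro i hi hd
        have h2 := ih i hi (by omega)
        have h3 := hAstep _ h2 (by omega)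
        rwa [show i - d - 1 = i - (d+1) by omega] at h3
    set a := aset.max' ⟨1, hane⟩ with hadef
    have ha_self : a ∈ aset := Finset.max'_mem _ _
    have hA_le : ∀ i ∈ aset, i ≤ a := fun i hi => Finset.le_max' _ i hi
    have ha1 : 1 ≤ a := ((ha_mem_iff a).mp ha_self).1
    have haN : a ≤ N - 2 := ((ha_mem_iff a).mp ha_self).2.1
    have hxadj_all : ∀ i, 1 ≤ i → i ≤ a → G.Adj x (v i) := by
      intro i h1 h2
      have := hAdown (a - i) a ha_self (by omega)
      rw [show a - (a - i) = i by omega] at this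
      exact ((ha_mem_iff i).mp this).2.2
    have hxnadj : ∀ i, a < i → i < N → ¬ G.Adj x (v i) := by
      intro i hgt hi hadj
      rcases (show i ≤ N - 2 ∨ i = N - 1 by omega) with h | h
      · have : i ∈ aset := (ha_mem_iff i).mpr ⟨by omega, h, hadj⟩
        have := hA_le i this
        omega
      · rw [h] at hadj
        exact hxy hadj
    -- the neighbourhood of y on s is an interval [j, N-2]
    set bset : Finset ℕ :=
      (Finset.range N).filter (fun i => 1 ≤ i ∧ i ≤ N-2 ∧ G.Adj y (v i)) with hbset
    have hb_mem_iff : ∀ i, i ∈ bset ↔ (1 ≤ i ∧ i ≤ N-2 ∧ G.Adj y (v i)) := by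
      intro i
      constructor
      · intro h; rw [hbset, Finset.mem_filter] at h; exact h.2
      · intro h; rw [hbset, Finset.mem_filter, Finset.mem_range]; exact ⟨by omega, h⟩
    have hbne : N - 2 ∈ bset := by
      rw [hb_mem_iff]
      refine ⟨by omega, le_refl _, ?_⟩
      rw [hydef]
      have := hstep (N-2) (by omega)
      rw [show N-2+1 = N-1 by omega] at this
      exact this.symm
    have hBstep : ∀ i ∈ bset, i + 1 ≤ N - 2 → i + 1 ∈ bset := by
      intro i hi h2
      obtain ⟨hi1, hi2, hadjy⟩ := (hb_mem_iff i).mp hi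
      have hne1 : v (i+1) ≠ x := by
        rw [hxdef]
        intro he
        have := hv_inj (by omega) (by omega) he
        omega
      have hne2 : v (i+1) ≠ y := by
        rw [hydef]
        intro he
        have := hv_inj (by omega) (by omega) he
        omega
      have hne3 : v (i+1) ≠ wb := fun he => hKnotS wb hwbK' (he ▸ hv_mem (by omega))
      rcases hdom wb hwbK' (v (i+1)) hne1 hne2 hne3 with h | h | h
      · exfalso
        refine hcross (i+1) (by omega) (by omega) h.symm ?_
        rw [show i+1-1 = i by omega]
        exact hadjy
      · rw [hb_mem_iff]
        exact ⟨by omega, h2, h.symm⟩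
      · exfalso
        refine h7e wb hwbK' (i+1) (by omega) (by omega) h.symm ?_
        rw [show i+1-1 = i by omega]
        exact hadjy
    have hBup : ∀ d i, i ∈ bset → i + d ≤ N - 2 → i + d ∈ bset := by
      intro d
      induction d with
      | zero => intro i hi _; simpa using hi
      | succ d ih =>
        intro i hi hd
        have h2 := ih i hi (by omega)
        have h3 := hBstep _ h2 (by omega)
        rwa [show i + d + 1 = i + (d+1) by omega] at h3
    set j := bset.min' ⟨N-2, hbne⟩ with hjdef
    have hj_self : j ∈ bset := Finset.min'_mem _ _
    have hB_ge : ∀ i ∈ bset, j ≤ i := fun i hi => Finset.min'_le _ i hi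
    have hj1 : 1 ≤ j := ((hb_mem_iff j).mp hj_self).1
    have hjN : j ≤ N - 2 := ((hb_mem_iff j).mp hj_self).2.1
    have hyadj_all : ∀ i, j ≤ i → i ≤ N - 2 → G.Adj y (v i) := by
      intro i h1 h2
      have := hBup (i - j) j hj_self (by omega)
      rw [show j + (i - j) = i by omega] at this
      exact ((hb_mem_iff i).mp this).2.2
    have hynadj : ∀ i, i < j → i < N → ¬ G.Adj y (v i) := by
      intro i hlt hi hadj
      rcases (show i = 0 ∨ (1 ≤ i ∧ i ≤ N - 2) ∨ i = N - 1 by omega) with h | h | h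
      · rw [h] at hadj
        rw [← hxdef] at hadj
        exact hxy hadj.symm
      · have : i ∈ bset := (hb_mem_iff i).mpr ⟨h.1, h.2, hadj⟩
        have := hB_ge i this
        omega
      · rw [h, ← hydef] at hadj
        exact G.loopless.irrefl y hadj
    -- relative position of a and j
    have hja : a ≤ j := by
      by_contra h
      push_neg at h
      refine hcross (j+1) (by omega) (by omega) (hxadj_all (j+1) (by omega) (by omega)) ?_
      rw [show j+1-1 = j by omega]
      exact ((hb_mem_iff j).mp hj_self).2.2
    have hja2 : j ≤ a + 2 := by
      by_contra h
      push_neg at h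
      have hz1 : G.Adj (v (a+1)) wb := by
        rcases hdom wb hwbK' (v (a+1)) (by
            rw [hxdef]; intro he; have := hv_inj (by omega) (by omega) he; omega) (by
            rw [hydef]; intro he; have := hv_inj (by omega) (by omega) he; omega)
            (fun he => hKnotS wb hwbK' (he ▸ hv_mem (by omega))) with hh | hh | hh
        · exact absurd hh.symm (hxnadj (a+1) (by omega) (by omega))
        · exact absurd hh.symm (hynadj (a+1) (by omega) (by omega))
        · exact hh
      have hz2 : G.Adj (v (a+2)) wb := by
        rcases hdom wb hwbK' (v (a+2)) (by
            rw [hxdef]; intro he; have := hv_inj (by omega) (by omega) he; omega) (by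
            rw [hydef]; intro he; have := hv_inj (by omega) (by omega) he; omega)
            (fun he => hKnotS wb hwbK' (he ▸ hv_mem (by omega))) with hh | hh | hh
        · exact absurd hh.symm (hxnadj (a+2) (by omega) (by omega))
        · exact absurd hh.symm (hynadj (a+2) (by omega) (by omega))
        · exact hh
      exact hnoK2 wb hwbK' (a+1) (by omega) hz1.symm (by
        rw [show a+1+1 = a+2 by omega]; exact hz2.symm)
    -- all attachments of K to s lie in [a, j]
    have hWrange : ∀ w ∈ K, ∀ i, i < N → G.Adj w (v i) → a ≤ i ∧ i ≤ j := by
      intro w hw i hi hadj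
      have hi1 : 1 ≤ i := by
        rcases Nat.eq_zero_or_pos i with h | h
        · rw [h, ← hxdef] at hadj
          exact absurd hadj (hext_x w hw)
        · omega
      have hi2 : i ≤ N - 2 := by
        by_contra h
        have : i = N - 1 := by omega
        rw [this, ← hydef] at hadj
        exact hext_y w hw hadj.symm
      constructor
      · by_contra h
        push_neg at h
        exact h7d w hw i (by omega) hadj (hxadj_all (i+1) (by omega) (by omega))
      · by_contra h
        push_neg at h
        exact h7e w hw i (by omega) (by omega) hadj (hyadj_all (i-1) (by omega) (by omega))
    -- in every case, all attachments are at one single vertex v c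
    have hfinal : ∃ c, c < N ∧ (∀ w ∈ K, ∀ i, i < N → G.Adj w (v i) → i = c) := by
      rcases (show j = a ∨ j = a + 1 ∨ j = a + 2 by omega) with hj | hj | hj
      · exact ⟨a, by omega, fun w hw i hi hadj => by
          have := hWrange w hw i hi hadj; omega⟩
      · by_cases hr : ∃ r ∈ K, G.Adj r (v (a+1))
        · by_cases hs0 : ∃ s0 ∈ K, G.Adj s0 (v a)
          · -- splice contradiction : path through s.take, all of K, s.drop
            exfalso
            obtain ⟨r, hrK, hradj⟩ := hr
            obtain ⟨s0, hs0K, hs0adj⟩ := hs0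
            have hs0r : s0 ≠ r := fun he => hnoK2 s0 hs0K a (by omega) hs0adj (by
              rw [he]; exact hradj)
            have hk2 : 2 ≤ k := by
              have hsub : ({s0, r} : Finset V) ⊆ K := by
                intro z hz
                simp only [Finset.mem_insert, Finset.mem_singleton] at hz
                rcases hz with rfl | rfl <;> assumption
              have hcard2 : ({s0, r} : Finset V).card = 2 := by
                rw [Finset.card_insert_of_notMem (by simp [hs0r]), Finset.card_singleton]
              have := Finset.card_le_card hsub
              omega
            set mid : List V := (s0 :: ((K.erase s0).erase r).toList) ++ [r] with hmid
            have hmid_mem : ∀ z ∈ mid, z ∈ K := by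
              intro z hz
              rw [hmid] at hz
              simp only [List.cons_append, List.mem_cons, List.mem_append,
                Finset.mem_toList, List.mem_singleton] at hz
              rcases hz with rfl | hz | hz
              · exact hs0K
              · exact Finset.mem_of_mem_erase (Finset.mem_of_mem_erase hz)
              · rcases hz with rfl | hz
                · exact hrK
                · exact absurd hz List.not_mem_nil
            have hmid_nd : mid.Nodup := by
              rw [hmid]
              refine List.Nodup.append ?_ (by simp) ?_
              · rw [List.nodup_cons]
                refine ⟨?_, Finset.nodup_toList _⟩
                intro hmem
                rw [Finset.mem_toList] at hmem
                exact (Finset.notMem_erase s0 K) (Finset.mem_of_mem_erase hmem)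
              · intro z hz hz'
                simp only [List.mem_singleton] at hz'
                subst hz'
                rcases List.mem_cons.mp hz with h | h
                · exact hs0r h.symm
                · rw [Finset.mem_toList] at h
                  exact (Finset.notMem_erase z _) h
            have hmid_ch : mid.Chain' G.Adj := by
              refine (pairwise_of_forall_ne' hmid_nd ?_).isChain
              intro p hp q hq hne
              exact hclique p (hmid_mem p hp) q (hmid_mem q hq) hne
            have hmid_len : mid.length = k := by
              rw [hmid, hkdef]
              simp only [List.cons_append, List.length_cons, List.length_append,
                Finset.length_toList, List.length_singleton]
              rw [Finset.card_erase_of_mem (Finset.mem_erase.mpr ⟨Ne.symm hs0r, hrK⟩),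
                Finset.card_erase_of_mem hs0K]
              have hkK : 2 ≤ K.card := hkdef ▸ hk2
              show K.card - 1 - 1 + 1 + 1 = K.card
              omega
            have hmid_last : mid.getLast? = some r := List.getLast?_concat
            have hmid_head : mid.head? = some s0 := by rw [hmid]; rfl
            have hmid_ne : mid ≠ [] := by rw [hmid]; simp
            have hmid_notS : ∀ z ∈ mid, z ∉ s := fun z hz => hKnotS z (hmid_mem z hz)
            refine hcontra (s.take (a+1) ++ (mid ++ s.drop (a+1))) ?_ ?_ ?_
            · refine List.Nodup.append (hnd_take _) ?_ ?_
              · refine List.Nodup.append hmid_nd (hnd_drop _) ?_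
                intro z hz hz'
                exact hmid_notS z hz (List.drop_subset _ _ hz')
              · intro z hz hz'
                rcases List.mem_append.mp hz' with h | h
                · exact hmid_notS z h (List.take_subset _ _ hz)
                · exact hdisj_td (a+1) z hz h
            · simp only [List.Chain']; rw [List.isChain_append]
              refine ⟨hs_ch.take _, ?_, ?_⟩
              · rw [List.isChain_append]
                refine ⟨hmid_ch, hs_ch.drop _, ?_⟩
                intro p hp q hq
                rw [hmid_last] at hp
                rw [hdrop_head (by omega : a + 1 < N)] at hq
                simp at hp hq
                subst hp; subst hq
                first | exact hradj | exact hradj.symm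
              · intro p hp q hq
                rw [htake_last (by omega : a < N)] at hp
                rw [List.head?_append_of_ne_nil _ hmid_ne, hmid_head] at hq
                simp at hp hq
                subst hp; subst hq
                first | exact hs0adj | exact hs0adj.symm
            · simp only [List.length_append, List.length_take, List.length_drop,
                hmid_len, hsl]
              omega
          · refine ⟨a+1, by omega, fun w hw i hi hadj => ?_⟩
            have h1 := hWrange w hw i hi hadj
            rcases (show i = a ∨ i = a + 1 by omega) with h | h
            · exact absurd ⟨w, hw, h ▸ hadj⟩ hs0
            · exact h
        · refine ⟨a, by omega, fun w hw i hi hadj => ?_⟩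
          have h1 := hWrange w hw i hi hadj
          rcases (show i = a ∨ i = a + 1 by omega) with h | h
          · exact h
          · exact absurd ⟨w, hw, h ▸ hadj⟩ hr
      · -- j = a + 2 : every vertex of K attaches exactly at a+1
        refine ⟨a+1, by omega, fun w hw i hi hadj => ?_⟩
        have hw1 : G.Adj (v (a+1)) w := by
          rcases hdom w hw (v (a+1)) (by
              rw [hxdef]; intro he; have := hv_inj (by omega) (by omega) he; omega) (by
              rw [hydef]; intro he; have := hv_inj (by omega) (by omega) he; omega)
              (fun he => hKnotS w hw (he ▸ hv_mem (by omega))) with hh | hh | hh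
          · exact absurd hh.symm (hxnadj (a+1) (by omega) (by omega))
          · exact absurd hh.symm (hynadj (a+1) (by omega) (by omega))
          · exact hh
        have hrange := hWrange w hw i hi hadj
        rcases (show i = a ∨ i = a + 1 ∨ i = a + 2 by omega) with h | h | h
        · exfalso
          refine hnoK2 w hw a (by omega) (h ▸ hadj) ?_
          exact hw1.symm
        · exact h
        · exfalso
          refine hnoK2 w hw (a+1) (by omega) hw1.symm ?_
          rw [show a+1+1 = a+2 by omega]
          exact h ▸ hadj
    -- conclusion: v c is a Gallai vertex
    obtain ⟨c, hcN, hattach⟩ := hfinal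
    have hkms : k ≤ ms := (hWk wb hwbK' ms hmsN hadjm).1
    refine ⟨v c, fun t hnd hch hlen => ?_⟩
    by_contra hvt
    by_cases hall : ∀ z ∈ t, z ∈ K
    · have h1 : t.toFinset.card ≤ k :=
        Finset.card_le_card (fun z hz => hall z (List.mem_toFinset.mp hz))
      rw [List.toFinset_card_of_nodup hnd, hlen] at h1
      omega
    · push_neg at hall
      obtain ⟨q0, hq0t, hq0K⟩ := hall
      by_cases hsome : ∃ p ∈ t, p ∈ K
      · obtain ⟨w', z', hw't, hz't, hadj', hw'K, hz'K⟩ :=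
          exists_boundary_in_list G (fun z => z ∈ K) t hch hsome ⟨q0, hq0t, hq0K⟩
        have hz's : z' ∈ s := by
          by_contra h
          exact hz'K ((hmemK z').mpr h)
        obtain ⟨i, hiN, hie⟩ := hmem_ex z' hz's
        have hic : i = c := hattach w' hw'K i hiN (hie ▸ hadj')
        refine hvt ?_
        rw [← hic, ← hie]
        exact hz't
      · push_neg at hsome
        have hsub : t.toFinset ⊆ sF.erase (v c) := by
          intro z hz
          rw [Finset.mem_erase]
          have hzt := List.mem_toFinset.mp hz
          refine ⟨fun he => hvt (he ▸ hzt), ?_⟩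
          rw [hsF, List.mem_toFinset]
          by_contra h
          exact hsome z hzt ((hmemK z).mpr h)
        have h2 := Finset.card_le_card hsub
        rw [List.toFinset_card_of_nodup hnd,
          Finset.card_erase_of_mem (by rw [hsF, List.mem_toFinset]; exact hv_mem hcN),
          hsF_card, hlen] at h2
        omega
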